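/- Let α > 0, z ∈ ℝ, and let μ be a Borel probability measure on ℝ with mean z (∫ζ μ(dζ) = z) and finite second moment. Let G denote the set of functions g : ℝ → ℝ with g(0)=0 that are twice differentiable with bounded first and second derivatives. Suppose π is a Borel probability measure on ℝ with finite first moment such that ∫[ g''(x) − x g'(x) + α∫(g(x+ζ) − g(x)) μ(dζ) ] π(dx) = 0 for every g ∈ G. Then for every g ∈ G, | ∫[ g''(x) − x g'(x) + α(g(x+z) − g(x)) ] π(dx) | ≤ (α/2)·∫(ζ−z)² μ(dζ)·‖g''‖_∞, where ‖g''‖_∞ := sup_{x∈ℝ}|g''(x)|. -/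

import Mathlib

open MeasureTheory Set

noncomputable section

/-- The class `G` of test functions: `g(0) = 0`, `g` twice differentiable with
bounded first and second derivatives. -/
def memG (g : ℝ → ℝ) : Prop :=
  g 0 = 0 ∧ Differentiable ℝ g ∧ Differentiable ℝ (deriv g) ∧
    (∃ C, ∀ x, |deriv g x| ≤ C) ∧ (∃ C, ∀ x, |deriv (deriv g) x| ≤ C)

/-- A differentiable function with derivative bounded by `C` is `C`-Lipschitz. -/
lemma lip_of_deriv_bound {f : ℝ → ℝ} {C : ℝ} (hf : Differentiable ℝ f)
    (hC : ∀ x, |deriv f x| ≤ C) (a b : ℝ) : |f b - f a| ≤ C * |b - a| := by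
  have hC0 : 0 ≤ C := le_trans (abs_nonneg _) (hC 0)
  have hlip : LipschitzWith C.toNNReal f := by
    refine lipschitzWith_of_nnnorm_deriv_le hf fun x => ?_
    rw [← NNReal.coe_le_coe, coe_nnnorm, Real.coe_toNNReal _ hC0, Real.norm_eq_abs]
    exact hC x
  have := hlip.dist_le_mul b a
  rwa [Real.dist_eq, Real.dist_eq, Real.coe_toNNReal _ hC0] at this

open scoped Interval in
/-- Second-order Taylor bound. -/
lemma taylor2 {g : ℝ → ℝ} {C : ℝ} (hg : Differentiable ℝ g)
    (hg' : Differentiable ℝ (deriv g)) (hC : ∀ x, |deriv (deriv g) x| ≤ C) (a b : ℝ) :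
    |g b - g a - deriv g a * (b - a)| ≤ C / 2 * (b - a) ^ 2 := by
  have hcont : Continuous (deriv g) := hg'.continuous
  have hftc : (∫ t in a..b, deriv g t) = g b - g a :=
    intervalIntegral.integral_deriv_eq_sub (fun x _ => hg x) (hcont.intervalIntegrable a b)
  have key : g b - g a - deriv g a * (b - a) = ∫ t in a..b, (deriv g t - deriv g a) := by
    rw [intervalIntegral.integral_sub (hcont.intervalIntegrable a b)
      (intervalIntegrable_const), hftc, intervalIntegral.integral_const]
    simp [smul_eq_mul]; ring
  rw [key]
  have h1 : ‖∫ t in a..b, (deriv g t - deriv g a)‖ ≤ ∫ t in Ι a b, ‖deriv g t - deriv g a‖ :=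
    intervalIntegral.norm_integral_le_integral_norm_uIoc
  rw [Real.norm_eq_abs] at h1
  refine h1.trans ?_
  have h2 : (∫ t in Ι a b, ‖deriv g t - deriv g a‖) ≤ ∫ t in Ι a b, C * |t - a| := by
    refine setIntegral_mono_on ?_ ?_ measurableSet_uIoc fun t _ => ?_
    · exact ((hcont.sub continuous_const).norm).integrableOn_uIoc
    · exact (continuous_const.mul ((continuous_id.sub continuous_const).abs)).integrableOn_uIoc
    · rw [Real.norm_eq_abs]
      exact lip_of_deriv_bound hg' hC a t
  refine h2.trans ?_
  have h3 : (∫ t in Ι a b, C * |t - a|) = C * ∫ t in Ι a b, |t - a| := integral_const_mul _ _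
  have h4 : (∫ t in Ι a b, |t - a|) = (b - a) ^ 2 / 2 := by
    have h0 := integral_pow_abs_sub_uIoc (a := a) (b := b) (n := 1)
    simp only [pow_one] at h0
    rw [h0]
    norm_num [sq_abs]
  rw [h3, h4]
  ring_nf
  exact le_refl _

theorem stmt17 (α z : ℝ) (hα : 0 < α)
    (μ : Measure ℝ) [IsProbabilityMeasure μ]
    (hmean : (∫ ζ, ζ ∂μ) = z) (hmom : Integrable (fun ζ => ζ ^ 2) μ)
    (π : Measure ℝ) [IsProbabilityMeasure π]
    (hπmom : Integrable (fun x => |x|) π)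
    -- π is the equilibrium distribution of the jump-diffusion with
    -- jump distribution μ: π(A g) = 0 for every g ∈ G
    (heq : ∀ g : ℝ → ℝ, memG g →
      (∫ x, (deriv (deriv g) x - x * deriv g x
          + α * ∫ ζ, (g (x + ζ) - g x) ∂μ) ∂π) = 0) :
    -- |π(A1 g)| ≤ (α/2) ∫ (ζ - z)² μ(dζ) ‖g''‖_∞ for every g ∈ G
    ∀ g : ℝ → ℝ, memG g → ∀ C : ℝ, (∀ x, |deriv (deriv g) x| ≤ C) →
      |∫ x, (deriv (deriv g) x - x * deriv g x + α * (g (x + z) - g x)) ∂π|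
        ≤ α / 2 * (∫ ζ, (ζ - z) ^ 2 ∂μ) * C := by
  intro g hG C hC
  obtain ⟨hg0, hg, hg', ⟨C1, hC1⟩, _⟩ := hG
  have hC10 : 0 ≤ C1 := le_trans (abs_nonneg _) (hC1 0)
  have hC0 : 0 ≤ C := le_trans (abs_nonneg _) (hC 0)
  have hgc : Continuous g := hg.continuous
  -- Lipschitz bound for g
  have hlip : ∀ a b : ℝ, |g b - g a| ≤ C1 * |b - a| := lip_of_deriv_bound hg hC1
  -- μ-integrability facts
  have habsμ : Integrable (fun ζ => |ζ|) μ := by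
    refine (hmom.add (integrable_const 1)).mono'
      (measurable_abs.aestronglyMeasurable) (ae_of_all _ fun ζ => ?_)
    simp only [Real.norm_eq_abs, abs_abs, Pi.add_apply]
    rcases le_or_gt (|ζ|) 1 with h | h
    · nlinarith [sq_nonneg ζ]
    · calc |ζ| ≤ |ζ| * |ζ| := le_mul_of_one_le_left (abs_nonneg _) h.le
        _ = ζ ^ 2 := by rw [← abs_mul, ← sq, abs_of_nonneg (sq_nonneg _)]
        _ ≤ ζ ^ 2 + 1 := by nlinarith
  have hidμ : Integrable (fun ζ => ζ) μ := by
    refine habsμ.mono' measurable_id.aestronglyMeasurable (ae_of_all _ fun ζ => ?_)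
    simp [Real.norm_eq_abs]
  have hsqμ : Integrable (fun ζ => (ζ - z) ^ 2) μ := by
    have : (fun ζ : ℝ => (ζ - z) ^ 2) = fun ζ => ζ ^ 2 - (2 * z) * ζ + z ^ 2 := by
      funext ζ; ring
    rw [this]
    exact (hmom.sub (hidμ.const_mul _)).add (integrable_const _)
  have hmean0 : (∫ ζ, (ζ - z) ∂μ) = 0 := by
    rw [integral_sub hidμ (integrable_const _), hmean, integral_const]
    simp
  -- inner integrand integrable in ζ for each x
  have hinner : ∀ x : ℝ, Integrable (fun ζ => g (x + ζ) - g x) μ := by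
    intro x
    refine (habsμ.const_mul C1).mono'
      ((hgc.comp (continuous_const.add continuous_id)).sub continuous_const).aestronglyMeasurable
      (ae_of_all _ fun ζ => ?_)
    simp only [Real.norm_eq_abs]
    calc |g (x + ζ) - g x| ≤ C1 * |(x + ζ) - x| := hlip x (x + ζ)
      _ = C1 * |ζ| := by ring_nf
  -- π-integrability facts
  have hf1 : Integrable (fun x => deriv (deriv g) x) π := by
    refine (integrable_const C).mono'
      (stronglyMeasurable_deriv (deriv g)).aestronglyMeasurable (ae_of_all _ fun x => ?_)
    rw [Real.norm_eq_abs]; exact hC x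
  have hf2 : Integrable (fun x => x * deriv g x) π := by
    refine (hπmom.const_mul C1).mono'
      (measurable_id.aestronglyMeasurable.mul
        (stronglyMeasurable_deriv g).aestronglyMeasurable) (ae_of_all _ fun x => ?_)
    rw [Real.norm_eq_abs, abs_mul]
    calc |x| * |deriv g x| ≤ |x| * C1 := by
          exact mul_le_mul_of_nonneg_left (hC1 x) (abs_nonneg x)
      _ = C1 * |x| := mul_comm _ _
  have hf3meas : AEStronglyMeasurable (fun x => ∫ ζ, (g (x + ζ) - g x) ∂μ) π := by
    have hcont2 : Continuous (fun p : ℝ × ℝ => g (p.1 + p.2) - g p.1) :=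
      (hgc.comp (continuous_fst.add continuous_snd)).sub (hgc.comp continuous_fst)
    exact (hcont2.stronglyMeasurable.integral_prod_right').aestronglyMeasurable
  have hf3bound : ∀ x : ℝ, ‖∫ ζ, (g (x + ζ) - g x) ∂μ‖ ≤ C1 * ∫ ζ, |ζ| ∂μ := by
    intro x
    refine (norm_integral_le_integral_norm _).trans ?_
    rw [← integral_const_mul]
    refine integral_mono_of_nonneg (ae_of_all _ fun ζ => norm_nonneg _)
      (habsμ.const_mul C1) (ae_of_all _ fun ζ => ?_)
    simp only [Real.norm_eq_abs]
    calc |g (x + ζ) - g x| ≤ C1 * |(x + ζ) - x| := hlip x (x + ζ)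
      _ = C1 * |ζ| := by ring_nf
  have hf3 : Integrable (fun x => ∫ ζ, (g (x + ζ) - g x) ∂μ) π :=
    (integrable_const (C1 * ∫ ζ, |ζ| ∂μ)).mono' hf3meas (ae_of_all _ hf3bound)
  have hf4 : Integrable (fun x => g (x + z) - g x) π := by
    refine (integrable_const (C1 * |z|)).mono'
      ((hgc.comp (continuous_id.add continuous_const)).sub hgc).aestronglyMeasurable
      (ae_of_all _ fun x => ?_)
    rw [Real.norm_eq_abs]
    calc |g (x + z) - g x| ≤ C1 * |(x + z) - x| := hlip x (x + z)
      _ = C1 * |z| := by ring_nf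
  -- rewrite heq
  have hf12 : Integrable (fun x => deriv (deriv g) x - x * deriv g x) π := hf1.sub hf2
  have hf3a : Integrable (fun x => α * ∫ ζ, (g (x + ζ) - g x) ∂μ) π := hf3.const_mul α
  have hf4a : Integrable (fun x => α * (g (x + z) - g x)) π := hf4.const_mul α
  have heqg := heq g ⟨hg0, hg, hg', ⟨C1, hC1⟩, ⟨C, hC⟩⟩
  have hsplit : (∫ x, (deriv (deriv g) x - x * deriv g x
      + α * ∫ ζ, (g (x + ζ) - g x) ∂μ) ∂π)
      = (∫ x, (deriv (deriv g) x - x * deriv g x) ∂π)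
        + α * ∫ x, (∫ ζ, (g (x + ζ) - g x) ∂μ) ∂π := by
    rw [integral_add hf12 hf3a, integral_const_mul]
  have hsplit' : (∫ x, (deriv (deriv g) x - x * deriv g x + α * (g (x + z) - g x)) ∂π)
      = (∫ x, (deriv (deriv g) x - x * deriv g x) ∂π)
        + α * ∫ x, (g (x + z) - g x) ∂π := by
    rw [integral_add hf12 hf4a, integral_const_mul]
  have hkey : (∫ x, (deriv (deriv g) x - x * deriv g x + α * (g (x + z) - g x)) ∂π)
      = α * ∫ x, ((g (x + z) - g x) - ∫ ζ, (g (x + ζ) - g x) ∂μ) ∂π := by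
    rw [integral_sub hf4 hf3, hsplit']
    rw [hsplit] at heqg
    linarith
  rw [hkey]
  -- pointwise bound on the difference
  set M : ℝ := ∫ ζ, (ζ - z) ^ 2 ∂μ with hM
  have hM0 : 0 ≤ M := integral_nonneg fun ζ => sq_nonneg _
  have hpt : ∀ x : ℝ, |(g (x + z) - g x) - ∫ ζ, (g (x + ζ) - g x) ∂μ| ≤ C / 2 * M := by
    intro x
    have hconst : (g (x + z) - g x) = ∫ _ζ, (g (x + z) - g x) ∂μ := by
      rw [integral_const]; simp
    have hdiff : (g (x + z) - g x) - (∫ ζ, (g (x + ζ) - g x) ∂μ)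
        = ∫ ζ, (g (x + z) - g (x + ζ)) ∂μ := by
      rw [hconst, ← integral_sub (integrable_const _) (hinner x)]
      congr 1; funext ζ; ring
    have hAint : Integrable (fun ζ => g (x + z) - g (x + ζ)) μ := by
      have : (fun ζ => g (x + z) - g (x + ζ))
          = fun ζ => (g (x + z) - g x) - (g (x + ζ) - g x) := by funext ζ; ring
      rw [this]
      exact (integrable_const _).sub (hinner x)
    have hBint : Integrable (fun ζ => deriv g (x + z) * (ζ - z)) μ :=
      (hidμ.sub (integrable_const z)).const_mul _
    have hsum : (∫ ζ, (g (x + z) - g (x + ζ)) ∂μ)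
        = ∫ ζ, ((g (x + z) - g (x + ζ)) + deriv g (x + z) * (ζ - z)) ∂μ := by
      rw [integral_add hAint hBint, integral_const_mul, hmean0, mul_zero, add_zero]
    rw [hdiff, hsum]
    have hnorm : ‖∫ ζ, ((g (x + z) - g (x + ζ)) + deriv g (x + z) * (ζ - z)) ∂μ‖
        ≤ ∫ ζ, ‖(g (x + z) - g (x + ζ)) + deriv g (x + z) * (ζ - z)‖ ∂μ :=
      norm_integral_le_integral_norm _
    rw [Real.norm_eq_abs] at hnorm
    refine hnorm.trans ?_
    have hle : (∫ ζ, ‖(g (x + z) - g (x + ζ)) + deriv g (x + z) * (ζ - z)‖ ∂μ)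
        ≤ ∫ ζ, C / 2 * (ζ - z) ^ 2 ∂μ := by
      refine integral_mono_of_nonneg (ae_of_all _ fun ζ => norm_nonneg _)
        (hsqμ.const_mul _) (ae_of_all _ fun ζ => ?_)
      simp only [Real.norm_eq_abs]
      have := taylor2 hg hg' hC (x + z) (x + ζ)
      have heq1 : (x + ζ) - (x + z) = ζ - z := by ring
      rw [heq1] at this
      calc |(g (x + z) - g (x + ζ)) + deriv g (x + z) * (ζ - z)|
          = |g (x + ζ) - g (x + z) - deriv g (x + z) * (ζ - z)| := by
            rw [← abs_neg]; congr 1; ring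
        _ ≤ C / 2 * (ζ - z) ^ 2 := this
    refine hle.trans ?_
    rw [integral_const_mul]
  -- combine
  rw [abs_mul, abs_of_pos hα]
  have hfinal : |∫ x, ((g (x + z) - g x) - ∫ ζ, (g (x + ζ) - g x) ∂μ) ∂π| ≤ C / 2 * M := by
    have h1 : ‖∫ x, ((g (x + z) - g x) - ∫ ζ, (g (x + ζ) - g x) ∂μ) ∂π‖
        ≤ ∫ x, ‖(g (x + z) - g x) - ∫ ζ, (g (x + ζ) - g x) ∂μ‖ ∂π :=
      norm_integral_le_integral_norm _
    rw [Real.norm_eq_abs] at h1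
    refine h1.trans ?_
    calc (∫ x, ‖(g (x + z) - g x) - ∫ ζ, (g (x + ζ) - g x) ∂μ‖ ∂π)
        ≤ ∫ _x, C / 2 * M ∂π := by
          refine integral_mono_of_nonneg (ae_of_all _ fun x => norm_nonneg _)
            (integrable_const _) (ae_of_all _ fun x => ?_)
          simp only [Real.norm_eq_abs]; exact hpt x
      _ = C / 2 * M := by rw [integral_const]; simp
  calc α * |∫ x, ((g (x + z) - g x) - ∫ ζ, (g (x + ζ) - g x) ∂μ) ∂π|
      ≤ α * (C / 2 * M) := mul_le_mul_of_nonneg_left hfinal hα.le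
    _ = α / 2 * M * C := by ring

end
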